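/- For every integer a ≥ 1, the minimal domination number of the hypercube of dimension 2^a satisfies γ_{2^a} = 2^(2^a − a). -/

import Mathlib

/-- A finite subset of the hypercube `Q_n = (ZMod 2)^n` is dominating if every point of the
hypercube is at Hamming distance at most 1 from some element of the subset. -/
def IsDominating {n : ℕ} (Δ : Finset (Fin n → ZMod 2)) : Prop :=
  ∀ y : Fin n → ZMod 2, ∃ x ∈ Δ, hammingDist x y ≤ 1

/-- The minimal domination number `γ_n` of the `n`-dimensional hypercube. -/
noncomputable def gamma (n : ℕ) : ℕ :=
  sInf {k | ∃ Δ : Finset (Fin n → ZMod 2), IsDominating Δ ∧ Δ.card = k}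

open Finset

namespace Stmt4Aux

variable {n : ℕ}

abbrev V (n : ℕ) := Fin n → ZMod 2

/-- The closed Hamming ball of radius 1. -/
def ball (v : V n) : Finset (V n) := Finset.univ.filter (fun w => hammingDist v w ≤ 1)

lemma mem_ball {v w : V n} : w ∈ ball v ↔ hammingDist v w ≤ 1 := by
  simp [ball]

def flip (v : V n) (i : Fin n) : V n := Function.update v i (v i + 1)

lemma hammingDist_flip (v : V n) (i : Fin n) : hammingDist v (flip v i) = 1 := by
  have h1 : ∀ p : ZMod 2, p ≠ p + 1 := by decide
  simp only [hammingDist]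
  have : (Finset.univ.filter fun j => v j ≠ flip v i j) = {i} := by
    ext j
    simp only [mem_filter, mem_univ, true_and, mem_singleton]; simp only [flip]
    rcases eq_or_ne j i with rfl | hji
    · simp [Function.update_self, h1]
    · simp only [Function.update_of_ne hji]
      simp [hji]
  rw [this, card_singleton]

lemma dist_le_one_iff {v w : V n} : hammingDist v w ≤ 1 ↔ w = v ∨ ∃ i, w = flip v i := by
  constructor
  · intro h
    interval_cases hd : hammingDist v w
    · exact Or.inl (eq_of_hammingDist_eq_zero (by rwa [hammingDist_comm]))
    · right
      obtain ⟨i, hi⟩ := Finset.card_eq_one.1 hd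
      refine ⟨i, funext fun j => ?_⟩
      rcases eq_or_ne j i with rfl | hji
      · have hj : j ∈ Finset.univ.filter fun k => v k ≠ w k := by
          simp only [hammingDist] at hi; rw [hi]; exact mem_singleton_self j
        have : v j ≠ w j := (mem_filter.1 hj).2
        have h2 : ∀ p q : ZMod 2, p ≠ q → q = p + 1 := by decide
        simp [flip, Function.update_self, h2 _ _ this]
      · have hj : j ∉ Finset.univ.filter fun k => v k ≠ w k := by
          simp only [hammingDist] at hi; rw [hi]; simpa using hji
        have : v j = w j := by simpa using hj
        simp [flip, Function.update_of_ne hji, ← this]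
  · rintro (rfl | ⟨i, rfl⟩)
    · simp [hammingDist_self]
    · rw [hammingDist_flip]

lemma card_ball (v : V n) : (ball v).card = n + 1 := by
  have h1 : ∀ p : ZMod 2, p ≠ p + 1 := by decide
  have hball : ball v = insert v (Finset.univ.image (flip v)) := by
    ext w
    simp only [mem_ball, dist_le_one_iff, mem_insert, mem_image, mem_univ, true_and]
    tauto
  have hinj : Function.Injective (flip v) := by
    intro i j hij
    by_contra hne
    have hi := congrFun hij i
    simp only [flip, Function.update_self, Function.update_of_ne hne] at hi
    exact h1 (v i) hi.symm
  have hnot : v ∉ Finset.univ.image (flip v) := by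
    intro hmem
    obtain ⟨i, _, hi⟩ := mem_image.1 hmem
    have := congrFun hi i
    simp only [flip, Function.update_self] at this
    exact h1 (v i) this.symm
  rw [hball, card_insert_of_notMem hnot, card_image_of_injective _ hinj, card_univ,
    Fintype.card_fin]

lemma dist_shift₁ (v c a : V n) : hammingDist v (v + c + a) = hammingDist c a := by
  have key : ∀ p q r : ZMod 2, (p ≠ p + q + r) ↔ (q ≠ r) := by decide
  simp only [hammingDist, Pi.add_apply]
  exact congrArg Finset.card (filter_congr fun i _ => by
    simpa using (key (v i) (c i) (a i)))

lemma dist_shift₂ (v c a : V n) : hammingDist c (v + c + a) = hammingDist v a := by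
  have key : ∀ p q r : ZMod 2, (q ≠ p + q + r) ↔ (p ≠ r) := by decide
  simp only [hammingDist, Pi.add_apply]
  exact congrArg Finset.card (filter_congr fun i _ => by
    simpa using (key (v i) (c i) (a i)))

/-- The intersection of two distinct radius-1 balls has even cardinality. -/
lemma inter_parity {v c : V n} (hvc : v ≠ c) :
    (((Finset.univ.filter fun w => hammingDist v w ≤ 1 ∧ hammingDist c w ≤ 1).card : ℕ) :
      ZMod 2) = 0 := by
  set s : Finset (V n) := Finset.univ.filter fun w => hammingDist v w ≤ 1 ∧ hammingDist c w ≤ 1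
    with hs
  have hcast : ((s.card : ℕ) : ZMod 2) = ∑ w ∈ s, (1 : ZMod 2) := by
    rw [Finset.sum_const, nsmul_eq_mul, mul_one]
  rw [hcast]
  refine Finset.sum_involution (fun a _ => v + c + a) (fun a ha => by decide)
    (fun a ha h => ?_) (fun a ha => ?_) (fun a ha => ?_)
  · -- v + c + a ≠ a
    intro heq
    apply hvc
    funext i
    have := congrFun heq i
    simp only [Pi.add_apply] at this
    have key : ∀ p q r : ZMod 2, p + q + r = r → p = q := by decide
    exact key _ _ _ this
  · -- membership
    simp only [hs, mem_filter, mem_univ, true_and] at ha ⊢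
    rw [dist_shift₁, dist_shift₂]
    exact ⟨ha.2, ha.1⟩
  · -- involution
    funext i
    simp only [Pi.add_apply]
    have key : ∀ p q r : ZMod 2, p + q + (p + q + r) = r := by decide
    exact key _ _ _

/-- number of codewords within distance 1 of `x` -/
def mu (Δ : Finset (V n)) (x : V n) : ℕ := (Δ.filter fun c => hammingDist x c ≤ 1).card

lemma sum_mu (Δ : Finset (V n)) : ∑ x, mu Δ x = (n + 1) * Δ.card := by
  unfold mu
  calc ∑ x, (Δ.filter fun c => hammingDist x c ≤ 1).card
      = ∑ x ∈ univ, ∑ c ∈ Δ, if hammingDist x c ≤ 1 then 1 else 0 := by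
        refine Finset.sum_congr rfl fun x _ => ?_
        rw [Finset.card_filter]
    _ = ∑ c ∈ Δ, ∑ x ∈ univ, if hammingDist x c ≤ 1 then 1 else 0 := Finset.sum_comm
    _ = ∑ c ∈ Δ, (n + 1) := by
        refine Finset.sum_congr rfl fun c _ => ?_
        rw [← Finset.card_filter]
        rw [show (univ.filter fun x => hammingDist x c ≤ 1) = ball c by
          ext w; simp [ball, hammingDist_comm]]
        exact card_ball c
    _ = (n + 1) * Δ.card := by rw [Finset.sum_const, smul_eq_mul, mul_comm]

lemma sum_mu_ball (hne : (n : ZMod 2) = 0) (Δ : Finset (V n)) (v : V n) :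
    ((∑ x ∈ ball v, mu Δ x : ℕ) : ZMod 2) = if v ∈ Δ then 1 else 0 := by
  have step1 : ((∑ x ∈ ball v, mu Δ x : ℕ) : ZMod 2)
      = ∑ c ∈ Δ, (((((ball v).filter fun x => hammingDist x c ≤ 1).card : ℕ)) : ZMod 2) := by
    push_cast
    unfold mu
    calc (∑ x ∈ ball v, ((Δ.filter fun c => hammingDist x c ≤ 1).card : ZMod 2))
        = ∑ x ∈ ball v, ∑ c ∈ Δ, if hammingDist x c ≤ 1 then (1 : ZMod 2) else 0 := by
          refine Finset.sum_congr rfl fun x _ => ?_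
          rw [Finset.card_filter]; push_cast; rfl
      _ = ∑ c ∈ Δ, ∑ x ∈ ball v, if hammingDist x c ≤ 1 then (1 : ZMod 2) else 0 :=
          Finset.sum_comm
      _ = _ := by
          refine Finset.sum_congr rfl fun c _ => ?_
          rw [Finset.card_filter]; push_cast; rfl
  rw [step1]
  have step2 : ∀ c ∈ Δ, ((((ball v).filter fun x => hammingDist x c ≤ 1).card : ℕ) : ZMod 2)
      = if c = v then 1 else 0 := by
    intro c _
    rcases eq_or_ne c v with rfl | hcv
    · rw [if_pos rfl]
      have : (ball c).filter (fun x => hammingDist x c ≤ 1) = ball c := by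
        apply Finset.filter_true_of_mem
        intro x hx
        rw [hammingDist_comm]; exact mem_ball.1 hx
      rw [this, card_ball]
      push_cast
      rw [hne]; ring
    · rw [if_neg hcv]
      have : (ball v).filter (fun x => hammingDist x c ≤ 1)
          = univ.filter fun w => hammingDist v w ≤ 1 ∧ hammingDist c w ≤ 1 := by
        ext w
        simp [ball, Finset.mem_filter, hammingDist_comm w c, and_comm]
      rw [this]
      exact inter_parity (fun h => hcv (h.symm))
  rw [Finset.sum_congr rfl step2, Finset.sum_ite_eq' Δ v (fun _ => (1 : ZMod 2))]

lemma card_univ_V : Fintype.card (V n) = 2 ^ n := by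
  rw [Fintype.card_fun, ZMod.card, Fintype.card_fin]

theorem lower_bound (hn2 : 2 ≤ n) (hne : (n : ZMod 2) = 0) (Δ : Finset (V n))
    (hΔ : IsDominating Δ) : 2 ^ n ≤ n * Δ.card := by
  classical
  -- excess function
  set e : V n → ℕ := fun x => mu Δ x - 1 with he
  have hmu1 : ∀ x, 1 ≤ mu Δ x := by
    intro x
    obtain ⟨c, hc, hd⟩ := hΔ x
    refine Finset.card_pos.2 ⟨c, Finset.mem_filter.2 ⟨hc, by rwa [hammingDist_comm]⟩⟩
  have hmue : ∀ x, mu Δ x = e x + 1 := fun x => by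
    have := hmu1 x; simp only [he]; omega
  set E : ℕ := ∑ x, e x with hEdef
  have hE : E + 2 ^ n = (n + 1) * Δ.card := by
    have h1 : ∑ x, mu Δ x = E + 2 ^ n := by
      rw [hEdef]
      calc ∑ x, mu Δ x = ∑ x, (e x + 1) := Finset.sum_congr rfl fun x _ => hmue x
        _ = (∑ x, e x) + ∑ _x : V n, 1 := Finset.sum_add_distrib
        _ = (∑ x, e x) + 2 ^ n := by rw [Finset.sum_const, smul_eq_mul, mul_one,
              Finset.card_univ, card_univ_V]
    rw [← h1, sum_mu]
  set ω : V n → ℕ := fun v => ∑ x ∈ ball v, e x with hω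
  have hsum_ball : ∀ v, ∑ x ∈ ball v, mu Δ x = ω v + (n + 1) := by
    intro v
    calc ∑ x ∈ ball v, mu Δ x = ∑ x ∈ ball v, (e x + 1) :=
          Finset.sum_congr rfl fun x _ => hmue x
      _ = (∑ x ∈ ball v, e x) + ∑ _x ∈ ball v, 1 := Finset.sum_add_distrib
      _ = ω v + (n + 1) := by rw [Finset.sum_const, smul_eq_mul, mul_one, card_ball]
  have hodd : ∀ v, v ∉ Δ → ω v % 2 = 1 := by
    intro v hv
    have h0 := sum_mu_ball hne Δ v
    rw [if_neg hv, hsum_ball v] at h0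
    push_cast at h0
    rw [hne] at h0
    have h1 : ((ω v : ℕ) : ZMod 2) + 1 = 0 := by
      calc ((ω v : ℕ) : ZMod 2) + 1 = (ω v : ZMod 2) + (0 + 1) := by ring
        _ = 0 := h0
    have h2 : ∀ z : ZMod 2, z + 1 = 0 → z = 1 := by decide
    have h3 : ¬ (2 ∣ ω v) := by
      intro hd
      rw [(ZMod.natCast_eq_zero_iff _ 2).2 hd] at h1
      exact (by decide : ¬ ((0 : ZMod 2) + 1 = 0)) h1
    omega
  set NC : Finset (V n) := univ.filter (fun v => v ∉ Δ) with hNCdef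
  have hNC : NC.card + Δ.card = 2 ^ n := by
    have := Finset.card_filter_add_card_filter_not (s := (univ : Finset (V n)))
      (p := fun v => v ∈ Δ)
    have hΔfilt : univ.filter (fun v => v ∈ Δ) = Δ := by
      ext x; simp
    rw [hΔfilt, Finset.card_univ, card_univ_V] at this
    rw [hNCdef]
    omega
  -- the count of non-codewords in the ball of x
  have hsplit : ∀ x : V n, ((ball x).filter (fun w => w ∈ Δ)).card
      + ((ball x).filter (fun w => w ∉ Δ)).card = n + 1 := by
    intro x
    rw [Finset.card_filter_add_card_filter_not, card_ball]
  have hballΔ : ∀ x : V n, ((ball x).filter (fun w => w ∈ Δ)).card = mu Δ x := by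
    intro x
    unfold mu
    congr 1
    ext w
    simp [ball, Finset.mem_filter, hammingDist_comm, and_comm]
  have hQ : ∀ x : V n, ((ball x).filter (fun w => w ∉ Δ)).card = n - e x := by
    intro x
    have h1 := hsplit x
    have h2 := hballΔ x
    have h3 := hmue x
    have h4 := hmu1 x
    have h5 : e x ≤ n := by
      have : mu Δ x ≤ (ball x).card := by
        rw [← h2]; exact Finset.card_filter_le _ _
      rw [card_ball] at this
      omega
    omega
  -- double counting of ∑_{v ∈ NC} ω v
  have hswap : ∑ v ∈ NC, ω v = ∑ x : V n, e x * ((ball x).filter (fun w => w ∉ Δ)).card := by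
    calc ∑ v ∈ NC, ω v = ∑ v ∈ NC, ∑ x ∈ univ, if hammingDist v x ≤ 1 then e x else 0 := by
          refine Finset.sum_congr rfl fun v _ => ?_
          have hv : ω v = ∑ x ∈ ball v, e x := rfl
          rw [hv, ball, Finset.sum_filter]
      _ = ∑ x ∈ univ, ∑ v ∈ NC, if hammingDist v x ≤ 1 then e x else 0 := Finset.sum_comm
      _ = ∑ x : V n, e x * ((ball x).filter (fun w => w ∉ Δ)).card := by
          refine Finset.sum_congr rfl fun x _ => ?_
          rw [← Finset.sum_filter]
          have hset : NC.filter (fun v => hammingDist v x ≤ 1)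
              = (ball x).filter (fun w => w ∉ Δ) := by
            ext v
            simp only [hNCdef, Finset.mem_filter, mem_univ, true_and, mem_ball]
            rw [hammingDist_comm]
            tauto
          rw [hset, Finset.sum_const, smul_eq_mul, mul_comm]
  have hS2 : ∑ v ∈ NC, ω v ≤ (n - 1) * E := by
    rw [hswap]
    calc ∑ x : V n, e x * ((ball x).filter (fun w => w ∉ Δ)).card
        ≤ ∑ x : V n, e x * (n - 1) := by
          refine Finset.sum_le_sum fun x _ => ?_
          rcases Nat.eq_zero_or_pos (e x) with h0 | h1
          · rw [h0]; simp
          · have := hQ x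
            have : ((ball x).filter (fun w => w ∉ Δ)).card ≤ n - 1 := by omega
            exact Nat.mul_le_mul_left _ this
      _ = (n - 1) * E := by rw [← Finset.sum_mul, ← hEdef, mul_comm]
  set T : Finset (V n) := NC.filter (fun v => ω v = 1) with hTdef
  have hS1 : 3 * NC.card ≤ (∑ v ∈ NC, ω v) + 2 * T.card := by
    have : ∀ v ∈ NC, 3 ≤ ω v + (if ω v = 1 then 2 else 0) := by
      intro v hv
      have hv' : v ∉ Δ := by
        rw [hNCdef] at hv
        exact (Finset.mem_filter.1 hv).2
      have := hodd v hv'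
      rcases eq_or_ne (ω v) 1 with h1 | h1
      · rw [if_pos h1]; omega
      · rw [if_neg h1]; omega
    calc 3 * NC.card = ∑ _v ∈ NC, 3 := by rw [Finset.sum_const, smul_eq_mul, mul_comm]
      _ ≤ ∑ v ∈ NC, (ω v + if ω v = 1 then 2 else 0) := Finset.sum_le_sum this
      _ = (∑ v ∈ NC, ω v) + ∑ v ∈ NC, (if ω v = 1 then 2 else 0) := Finset.sum_add_distrib
      _ = (∑ v ∈ NC, ω v) + 2 * T.card := by
          rw [← Finset.sum_filter, ← hTdef, Finset.sum_const, smul_eq_mul, mul_comm]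
  set X1 : Finset (V n) := univ.filter (fun x => e x = 1) with hX1def
  have hE1 : X1.card ≤ E := by
    rw [hEdef]
    calc X1.card = ∑ x ∈ X1, 1 := by rw [Finset.sum_const, smul_eq_mul, mul_one]
      _ = ∑ x ∈ X1, e x := by
          refine Finset.sum_congr rfl fun x hx => ?_
          rw [hX1def] at hx
          exact ((Finset.mem_filter.1 hx).2).symm
      _ ≤ ∑ x, e x := Finset.sum_le_sum_of_subset (Finset.subset_univ X1)
  have hS3 : T.card ≤ (n - 1) * X1.card := by
    have hsub : T ⊆ X1.biUnion (fun x => (ball x).filter (fun w => w ∉ Δ)) := by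
      intro v hv
      rw [hTdef] at hv
      obtain ⟨hvNC, hω1⟩ := Finset.mem_filter.1 hv
      have hvΔ : v ∉ Δ := by
        rw [hNCdef] at hvNC
        exact (Finset.mem_filter.1 hvNC).2
      have hb : (∑ x ∈ ball v, e x) = 1 := hω1
      have hne0 : (∑ x ∈ ball v, e x) ≠ 0 := by omega
      obtain ⟨x, hxball, hxne⟩ := Finset.exists_ne_zero_of_sum_ne_zero hne0
      have hle : e x ≤ 1 := by
        have := Finset.single_le_sum (f := e) (fun y _ => Nat.zero_le _) hxball
        omega
      have hex : e x = 1 := by omega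
      refine Finset.mem_biUnion.2 ⟨x, ?_, ?_⟩
      · rw [hX1def]; exact Finset.mem_filter.2 ⟨mem_univ _, hex⟩
      · refine Finset.mem_filter.2 ⟨?_, hvΔ⟩
        rw [mem_ball, hammingDist_comm]
        exact mem_ball.1 hxball
    calc T.card ≤ (X1.biUnion (fun x => (ball x).filter (fun w => w ∉ Δ))).card :=
          Finset.card_le_card hsub
      _ ≤ ∑ x ∈ X1, ((ball x).filter (fun w => w ∉ Δ)).card := Finset.card_biUnion_le
      _ ≤ ∑ x ∈ X1, (n - 1) := by
          refine Finset.sum_le_sum fun x hx => ?_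
          rw [hX1def] at hx
          have hex : e x = 1 := (Finset.mem_filter.1 hx).2
          rw [hQ x, hex]
      _ = (n - 1) * X1.card := by rw [Finset.sum_const, smul_eq_mul, mul_comm]
  -- final arithmetic
  set k : ℕ := n - 1 with hkdef
  have hkn : n = k + 1 := by omega
  have hC : NC.card ≤ k * E := by
    have h1 : 3 * NC.card ≤ 3 * (k * E) := by
      have h2 : k * X1.card ≤ k * E := Nat.mul_le_mul_left k hE1
      calc 3 * NC.card ≤ (∑ v ∈ NC, ω v) + 2 * T.card := hS1
        _ ≤ k * E + 2 * (k * X1.card) := by omega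
        _ ≤ k * E + 2 * (k * E) := by omega
        _ = 3 * (k * E) := by ring
    omega
  have key : 2 ^ n ≤ Δ.card + k * E := by omega
  have hEn : 2 ^ n + E = (n + 1) * Δ.card := by omega
  have step : (k + 1) * 2 ^ n ≤ (k + 1) * ((k + 1) * Δ.card) := by
    calc (k + 1) * 2 ^ n = k * 2 ^ n + 2 ^ n := by ring
      _ ≤ k * 2 ^ n + (Δ.card + k * E) := by omega
      _ = k * (2 ^ n + E) + Δ.card := by ring
      _ = k * ((n + 1) * Δ.card) + Δ.card :=
          congrArg (fun t => k * t + Δ.card) hEn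
      _ = (k + 1) * ((k + 1) * Δ.card) := by
          rw [show n + 1 = k + 2 by omega]; ring
  have final : 2 ^ n ≤ (k + 1) * Δ.card := Nat.le_of_mul_le_mul_left step (Nat.succ_pos k)
  rwa [show k + 1 = n by omega] at final

lemma exists_dominating (a n : ℕ) (hn : n = 2 ^ a) :
    ∃ Δ : Finset (Fin n → ZMod 2), IsDominating Δ ∧ Δ.card = 2 ^ (n - a) := by
  classical
  have hcard_eq : Fintype.card (Fin n) = Fintype.card (Fin a → ZMod 2) := by
    rw [Fintype.card_fin, Fintype.card_fun, ZMod.card, Fintype.card_fin, hn]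
  let eqv : Fin n ≃ (Fin a → ZMod 2) := Fintype.equivOfCardEq hcard_eq
  let ψ : (Fin n → ZMod 2) →ₗ[ZMod 2] (Fin a → ZMod 2) :=
    Fintype.linearCombination (ZMod 2) (fun i => eqv i)
  have hψ_single : ∀ i : Fin n, ψ (Pi.single i 1) = eqv i := by
    intro i
    simp [ψ, Fintype.linearCombination_apply_single]
  have hsurj : Function.Surjective ψ := by
    intro u
    refine ⟨Pi.single (eqv.symm u) 1, ?_⟩
    rw [hψ_single, Equiv.apply_symm_apply]
  have haddself : ∀ u : Fin a → ZMod 2, u + u = 0 := by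
    intro u
    funext j
    have : ∀ z : ZMod 2, z + z = 0 := by decide
    simpa using this (u j)
  refine ⟨univ.filter (fun x => ψ x = 0), ?_, ?_⟩
  · -- dominating
    intro y
    by_cases h : ψ y = 0
    · exact ⟨y, Finset.mem_filter.2 ⟨mem_univ _, h⟩, by rw [hammingDist_self]; omega⟩
    · set i : Fin n := eqv.symm (ψ y) with hi
      set c : Fin n → ZMod 2 := y + Pi.single i 1 with hc
      refine ⟨c, Finset.mem_filter.2 ⟨mem_univ _, ?_⟩, ?_⟩
      · rw [hc, map_add, hψ_single, hi, Equiv.apply_symm_apply, haddself]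
      · -- hammingDist c y ≤ 1
        have hfilter : (univ.filter fun j => c j ≠ y j) = {i} := by
          ext j
          simp only [mem_filter, mem_univ, true_and, mem_singleton, hc, Pi.add_apply]
          rcases eq_or_ne j i with rfl | hji
          · simp only [Pi.single_eq_same]
            have : ∀ z : ZMod 2, z + 1 ≠ z := by decide
            simp only [iff_true]; exact this _
          · simp only [Pi.single_eq_of_ne hji, add_zero]
            simp [hji]
        simp only [hammingDist]
        rw [hfilter, card_singleton]
  · -- cardinality
    have h1 : (univ.filter (fun x => ψ x = 0)).card
        = Fintype.card {x : Fin n → ZMod 2 // ψ x = 0} :=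
      (Fintype.card_subtype _).symm
    have h2 : Fintype.card {x : Fin n → ZMod 2 // ψ x = 0}
        = Fintype.card (LinearMap.ker ψ) :=
      Fintype.card_congr (Equiv.subtypeEquivRight (fun x => (LinearMap.mem_ker).symm))
    have h3 : Fintype.card (LinearMap.ker ψ)
        = 2 ^ (Module.finrank (ZMod 2) (LinearMap.ker ψ)) := by
      rw [Module.card_eq_pow_finrank (K := ZMod 2), ZMod.card]
    have hrange : LinearMap.range ψ = ⊤ := LinearMap.range_eq_top.2 hsurj
    have hrn := LinearMap.finrank_range_add_finrank_ker ψ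
    rw [hrange, finrank_top, Module.finrank_fintype_fun_eq_card, Fintype.card_fin,
      Module.finrank_fintype_fun_eq_card, Fintype.card_fin] at hrn
    have hak : Module.finrank (ZMod 2) (LinearMap.ker ψ) = n - a := by omega
    rw [h1, h2, h3, hak]

end Stmt4Aux

/-- For every integer `a ≥ 1`, `γ_{2^a} = 2^(2^a − a)`. -/
theorem stmt_4 (a : ℕ) (ha : 1 ≤ a) : gamma (2 ^ a) = 2 ^ (2 ^ a - a) := by
  classical
  obtain ⟨Δ₀, hdom, hcard⟩ := Stmt4Aux.exists_dominating a (2 ^ a) rfl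
  have hmem : 2 ^ (2 ^ a - a) ∈
      {k | ∃ Δ : Finset (Fin (2 ^ a) → ZMod 2), IsDominating Δ ∧ Δ.card = k} :=
    ⟨Δ₀, hdom, hcard⟩
  have hlb : ∀ k ∈
      {k | ∃ Δ : Finset (Fin (2 ^ a) → ZMod 2), IsDominating Δ ∧ Δ.card = k},
      2 ^ (2 ^ a - a) ≤ k := by
    rintro k ⟨Δ, hΔ, rfl⟩
    have hn2 : 2 ≤ 2 ^ a := by
      calc 2 = 2 ^ 1 := (pow_one 2).symm
        _ ≤ 2 ^ a := Nat.pow_le_pow_right (by omega) ha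
    have hne : (((2 : ℕ) ^ a : ℕ) : ZMod 2) = 0 := by
      rw [ZMod.natCast_eq_zero_iff]
      exact dvd_pow_self 2 (by omega)
    have h := Stmt4Aux.lower_bound hn2 hne Δ hΔ
    have hsplit : (2 : ℕ) ^ (2 ^ a) = 2 ^ a * 2 ^ (2 ^ a - a) := by
      rw [← pow_add]
      congr 1
      have : a ≤ 2 ^ a := (Nat.lt_two_pow_self (n := a)).le
      omega
    rw [hsplit] at h
    exact Nat.le_of_mul_le_mul_left h (by positivity)
  rw [gamma]
  exact le_antisymm (Nat.sInf_le hmem) (le_csInf ⟨_, hmem⟩ hlb)
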